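/- Let ρ₀ be a smooth function on the strip S = T×[−π,π], and let (ρ,u,p) be a global smooth solution of the IPM system on S with ρ(·,0) = ρ₀. Define E(t) = ∫_S x₂ ρ(x,t) dx. Then for every t ≥ 0, E'(t) = −∫_S |u(x,t)|² dx; in particular E is nonincreasing, and ∫₀^∞ ∫_S |u(x,t)|² dx dt ≤ E(0) + 2π³ sup|ρ₀|. -/

import Mathlib

open Real MeasureTheory Filter Topology
open scoped ENNReal NNReal

noncomputable section

/-- Points of the plane; functions on the strip `S = T × [-π,π]` are identified with functions on
`ℝ × [-π,π]` that are `2π`-periodic in `x₁` (smooth functions on the closed strip are viewed as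
restrictions of smooth functions on `ℝ²`). -/
abbrev Pt : Type := ℝ × ℝ

/-- `2π`-periodicity in the first variable. -/
def Per1 (f : Pt → ℝ) : Prop := ∀ x : Pt, f (x.1 + 2 * π, x.2) = f x

/-- Partial derivative in the first space variable. -/
def pd1 (f : Pt → ℝ) (x : Pt) : ℝ := deriv (fun y => f (y, x.2)) x.1

/-- Partial derivative in the second space variable. -/
def pd2 (f : Pt → ℝ) (x : Pt) : ℝ := deriv (fun y => f (x.1, y)) x.2

/-- The fundamental domain `[-π,π] × [-π,π]` of the strip `S`. -/
def QS : Set Pt := Set.Icc (-π) π ×ˢ Set.Icc (-π) π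

/-- The Dirichlet eigenfunctions in the vertical variable:
`b_q(y) = cos(qy/2)` for `q` odd and `b_q(y) = sin(qy/2)` for `q` even. -/
def bq (q : ℕ) (y : ℝ) : ℝ :=
  if q % 2 = 1 then Real.cos (q * y / 2) else Real.sin (q * y / 2)

/-- Eigenfunction coefficients on the strip:
`c_{p,q}(f) = (2π²)⁻¹ ∫_S f(x) e^{-ipx₁} b_q(x₂) dx`. -/
def scoef (f : Pt → ℝ) (pq : ℤ × ℕ) : ℂ :=
  ((2 * π ^ 2 : ℝ))⁻¹ *
    ∫ x in QS, (f x : ℂ) * Complex.exp (-Complex.I * (((pq.1 : ℝ) * x.1 : ℝ) : ℂ)) *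
      ((bq pq.2 x.2 : ℝ) : ℂ)

/-- Homogeneous Sobolev norm on the strip (valued in `ℝ≥0∞`):
`‖f‖_{Ḣ^s(S)}² = 2π² Σ_{p∈ℤ, q≥1} (p² + q²/4)^s |c_{p,q}(f)|²`. -/
def sobS (s : ℝ) (f : Pt → ℝ) : ℝ≥0∞ :=
  (ENNReal.ofReal (2 * π ^ 2) *
    ∑' pq : ℤ × ℕ, (if 1 ≤ pq.2 then
      ENNReal.ofReal (((pq.1 : ℝ) ^ 2 + (pq.2 : ℝ) ^ 2 / 4) ^ s) * (‖scoef f pq‖₊ : ℝ≥0∞) ^ 2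
      else 0)) ^ (1/2 : ℝ)

/-- Inhomogeneous Sobolev norm on the strip: `‖f‖_{H^s(S)}² = ‖f‖_{Ḣ^s(S)}² + ‖f‖_{L²(S)}²`. -/
def hsobS (s : ℝ) (f : Pt → ℝ) : ℝ≥0∞ :=
  (sobS s f ^ 2 + ∫⁻ x in QS, ENNReal.ofReal (f x ^ 2)) ^ (1/2 : ℝ)

/-- A global smooth solution of the IPM system on the strip `S = T × [-π,π]`:
`∂_t ρ + u·∇ρ = 0`, `∇·u = 0`, `u + ∇p = -(0,ρ)` on `S` for all `t ≥ 0`, with `ρ, u, p` smooth,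
`2π`-periodic in `x₁`, and the no-flow condition `u₂ = 0` on `x₂ = ±π`. -/
structure IsIPMSolS (ρ : Pt → ℝ → ℝ) (u : Pt → ℝ → Pt) (p : Pt → ℝ → ℝ) : Prop where
  smooth_rho : ContDiff ℝ (⊤ : ℕ∞) fun q : Pt × ℝ => ρ q.1 q.2
  smooth_u : ContDiff ℝ (⊤ : ℕ∞) fun q : Pt × ℝ => u q.1 q.2
  smooth_p : ContDiff ℝ (⊤ : ℕ∞) fun q : Pt × ℝ => p q.1 q.2
  per_rho : ∀ t : ℝ, 0 ≤ t → Per1 fun x => ρ x t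
  per_u1 : ∀ t : ℝ, 0 ≤ t → Per1 fun x => (u x t).1
  per_u2 : ∀ t : ℝ, 0 ≤ t → Per1 fun x => (u x t).2
  per_p : ∀ t : ℝ, 0 ≤ t → Per1 fun x => p x t
  transport : ∀ x : Pt, x.2 ∈ Set.Icc (-π) π → ∀ t : ℝ, 0 ≤ t →
    deriv (fun τ => ρ x τ) t
      + (u x t).1 * pd1 (fun y => ρ y t) x + (u x t).2 * pd2 (fun y => ρ y t) x = 0
  incomp : ∀ x : Pt, x.2 ∈ Set.Icc (-π) π → ∀ t : ℝ, 0 ≤ t →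
    pd1 (fun y => (u y t).1) x + pd2 (fun y => (u y t).2) x = 0
  darcy1 : ∀ x : Pt, x.2 ∈ Set.Icc (-π) π → ∀ t : ℝ, 0 ≤ t →
    (u x t).1 + pd1 (fun y => p y t) x = 0
  darcy2 : ∀ x : Pt, x.2 ∈ Set.Icc (-π) π → ∀ t : ℝ, 0 ≤ t →
    (u x t).2 + pd2 (fun y => p y t) x = -ρ x t
  noflow_top : ∀ x₁ : ℝ, ∀ t : ℝ, 0 ≤ t → (u (x₁, π) t).2 = 0
  noflow_bot : ∀ x₁ : ℝ, ∀ t : ℝ, 0 ≤ t → (u (x₁, -π) t).2 = 0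


section AuxIPM

lemma measurableSet_QS : MeasurableSet QS := measurableSet_Icc.prod measurableSet_Icc
lemma isCompact_QS : IsCompact QS := isCompact_Icc.prod isCompact_Icc

lemma per_endpoint {f : Pt → ℝ} (hf : Per1 f) (y : ℝ) : f (π, y) = f (-π, y) := by
  have := hf (-π, y)
  rwa [show (-π + 2 * π : ℝ) = π by ring] at this

/-- slice in x1 of a space-time function -/
lemma slice1 {Φ : Pt × ℝ → ℝ} (hΦ : Differentiable ℝ Φ) (a b t : ℝ) :
    HasDerivAt (fun y => Φ ((y, b), t)) (fderiv ℝ Φ (((a, b), t)) ((1, 0), 0)) a := by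
  have hl : HasDerivAt (fun y : ℝ => (((y, b), t) : Pt × ℝ)) ((1, 0), 0) a :=
    ((hasDerivAt_id a).prodMk (hasDerivAt_const a b)).prodMk (hasDerivAt_const a t)
  exact (hΦ ((a, b), t)).hasFDerivAt.comp_hasDerivAt a hl

lemma slice2 {Φ : Pt × ℝ → ℝ} (hΦ : Differentiable ℝ Φ) (a b t : ℝ) :
    HasDerivAt (fun y => Φ ((a, y), t)) (fderiv ℝ Φ (((a, b), t)) ((0, 1), 0)) b := by
  have hl : HasDerivAt (fun y : ℝ => (((a, y), t) : Pt × ℝ)) ((0, 1), 0) b :=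
    ((hasDerivAt_const b a).prodMk (hasDerivAt_id b)).prodMk (hasDerivAt_const b t)
  exact (hΦ ((a, b), t)).hasFDerivAt.comp_hasDerivAt b hl

lemma sliceT {Φ : Pt × ℝ → ℝ} (hΦ : Differentiable ℝ Φ) (a b t : ℝ) :
    HasDerivAt (fun τ => Φ ((a, b), τ)) (fderiv ℝ Φ (((a, b), t)) ((0, 0), 1)) t := by
  have hl : HasDerivAt (fun τ : ℝ => (((a, b), τ) : Pt × ℝ)) ((0, 0), 1) t :=
    ((hasDerivAt_const t a).prodMk (hasDerivAt_const t b)).prodMk (hasDerivAt_id t)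
  exact (hΦ ((a, b), t)).hasFDerivAt.comp_hasDerivAt t hl

lemma cont_dirDeriv {Φ : Pt × ℝ → ℝ} (hΦ : ContDiff ℝ (⊤ : ℕ∞) Φ) (v : Pt × ℝ) :
    Continuous fun q : Pt × ℝ => fderiv ℝ Φ q v :=
  (hΦ.continuous_fderiv (by norm_num)).clm_apply continuous_const

/-- Uniform bound on a compact slab. -/
lemma compact_bound {H : Pt → ℝ → ℝ} (hH : Continuous fun q : Pt × ℝ => H q.1 q.2) (t₀ : ℝ) :
    ∃ C : ℝ, ∀ x ∈ QS, ∀ t ∈ Metric.closedBall t₀ 1, ‖H x t‖ ≤ C := by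
  obtain ⟨C, hC⟩ := (isCompact_QS.prod (isCompact_closedBall t₀ 1)).exists_bound_of_continuousOn
    hH.continuousOn
  exact ⟨C, fun x hx t ht => hC (x, t) ⟨hx, ht⟩⟩

lemma param_cont {H : Pt → ℝ → ℝ} (hH : Continuous fun q : Pt × ℝ => H q.1 q.2) :
    Continuous fun t => ∫ x in QS, H x t := by
  rw [continuous_iff_continuousAt]
  intro t₀
  obtain ⟨C, hC⟩ := compact_bound hH t₀
  apply continuousAt_of_dominated (bound := fun _ => C)
  · exact Eventually.of_forall fun t =>
      (hH.comp (continuous_id.prodMk continuous_const)).aestronglyMeasurable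
  · filter_upwards [Metric.closedBall_mem_nhds t₀ one_pos] with t ht
    refine (ae_restrict_iff' measurableSet_QS).2 (Eventually.of_forall fun x hx => hC x hx t ht)
  · exact (integrableOn_const isCompact_QS.measure_lt_top.ne)
  · exact Eventually.of_forall fun x =>
      (hH.comp (continuous_const.prodMk continuous_id)).continuousAt

lemma param_hasDerivAt {H H' : Pt → ℝ → ℝ}
    (hH : Continuous fun q : Pt × ℝ => H q.1 q.2)
    (hH' : Continuous fun q : Pt × ℝ => H' q.1 q.2)
    (hd : ∀ (x : Pt) (t : ℝ), HasDerivAt (H x) (H' x t) t) (t₀ : ℝ) :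
    HasDerivAt (fun τ => ∫ x in QS, H x τ) (∫ x in QS, H' x t₀) t₀ := by
  obtain ⟨C, hC⟩ := compact_bound hH' t₀
  have := hasDerivAt_integral_of_dominated_loc_of_deriv_le (μ := volume.restrict QS)
    (F := fun t x => H x t) (F' := fun t x => H' x t) (bound := fun _ => C)
    (x₀ := t₀) (s := Metric.ball t₀ 1) (Metric.ball_mem_nhds t₀ one_pos)
    (Eventually.of_forall fun t =>
      (hH.comp (continuous_id.prodMk continuous_const)).aestronglyMeasurable)
    ((hH.comp (continuous_id.prodMk continuous_const)).continuousOn.integrableOn_compact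
      isCompact_QS)
    (hH'.comp (continuous_id.prodMk continuous_const)).aestronglyMeasurable
    ((ae_restrict_iff' measurableSet_QS).2 (Eventually.of_forall fun x hx =>
      fun t ht => hC x hx t (Metric.ball_subset_closedBall ht)))
    (integrableOn_const isCompact_QS.measure_lt_top.ne)
    (Eventually.of_forall fun x t _ => hd x t)
  exact this.2

lemma sslice1 {A : Pt → ℝ} (hA : Differentiable ℝ A) (x : Pt) :
    HasDerivAt (fun y => A (y, x.2)) (fderiv ℝ A x (1, 0)) x.1 := by
  have hl : HasDerivAt (fun y : ℝ => ((y, x.2) : Pt)) (1, 0) x.1 :=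
    (hasDerivAt_id x.1).prodMk (hasDerivAt_const x.1 x.2)
  exact (hA x).hasFDerivAt.comp_hasDerivAt x.1 hl

lemma sslice2 {A : Pt → ℝ} (hA : Differentiable ℝ A) (x : Pt) :
    HasDerivAt (fun y => A (x.1, y)) (fderiv ℝ A x (0, 1)) x.2 := by
  have hl : HasDerivAt (fun y : ℝ => ((x.1, y) : Pt)) (0, 1) x.2 :=
    (hasDerivAt_const x.2 x.1).prodMk (hasDerivAt_id x.2)
  exact (hA x).hasFDerivAt.comp_hasDerivAt x.2 hl

lemma pd1_eq {A : Pt → ℝ} (hA : Differentiable ℝ A) (x : Pt) :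
    pd1 A x = fderiv ℝ A x (1, 0) := (sslice1 hA x).deriv

lemma pd2_eq {A : Pt → ℝ} (hA : Differentiable ℝ A) (x : Pt) :
    pd2 A x = fderiv ℝ A x (0, 1) := (sslice2 hA x).deriv

/-- Divergence theorem on `QS` with periodic / vanishing boundary conditions. -/
lemma div_QS {A B : Pt → ℝ} (hA : ContDiff ℝ 1 A) (hB : ContDiff ℝ 1 B)
    (hAper : ∀ y ∈ Set.Icc (-π) π, A (π, y) = A (-π, y))
    (hBtop : ∀ z ∈ Set.Icc (-π) π, B (z, π) = 0)
    (hBbot : ∀ z ∈ Set.Icc (-π) π, B (z, -π) = 0) :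
    ∫ x in QS, (pd1 A x + pd2 B x) = 0 := by
  have hA' : Differentiable ℝ A := hA.differentiable one_ne_zero
  have hB' : Differentiable ℝ B := hB.differentiable one_ne_zero
  have hcont : Continuous fun x : Pt => fderiv ℝ A x (1, 0) + fderiv ℝ B x (0, 1) :=
    ((hA.continuous_fderiv one_ne_zero).clm_apply continuous_const).add
      ((hB.continuous_fderiv one_ne_zero).clm_apply continuous_const)
  have hQS : QS = Set.Icc ((-π, -π) : Pt) ((π, π) : Pt) := by
    rw [QS, Set.Icc_prod_Icc]
  have hle : ((-π, -π) : Pt) ≤ (π, π) := by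
    constructor <;> simp <;> linarith [pi_pos]
  have key := integral_divergence_prod_Icc_of_hasFDerivAt_off_countable_of_le
    A B (fun x => fderiv ℝ A x) (fun x => fderiv ℝ B x) ((-π, -π) : Pt) ((π, π) : Pt) hle
    ∅ Set.countable_empty hA'.continuous.continuousOn hB'.continuous.continuousOn
    (fun x _ => (hA' x).hasFDerivAt) (fun x _ => (hB' x).hasFDerivAt)
    (hcont.continuousOn.integrableOn_compact (hQS ▸ isCompact_QS))
  have e1 : ∫ x in QS, (pd1 A x + pd2 B x)
      = ∫ x in Set.Icc ((-π, -π) : Pt) ((π, π) : Pt),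
          (fderiv ℝ A x (1, 0) + fderiv ℝ B x (0, 1)) := by
    rw [← hQS]
    exact setIntegral_congr_fun measurableSet_QS fun x _ => by
      rw [pd1_eq hA', pd2_eq hB']
  rw [e1, key]
  have hb1 : (∫ z in (-π : ℝ)..π, B (z, π)) = 0 := by
    rw [intervalIntegral.integral_congr (g := fun _ => (0:ℝ))
      (fun z hz => hBtop z (by rwa [Set.uIcc_of_le (by linarith [pi_pos])] at hz))]
    simp
  have hb2 : (∫ z in (-π : ℝ)..π, B (z, -π)) = 0 := by
    rw [intervalIntegral.integral_congr (g := fun _ => (0:ℝ))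
      (fun z hz => hBbot z (by rwa [Set.uIcc_of_le (by linarith [pi_pos])] at hz))]
    simp
  have hb3 : (∫ y in (-π : ℝ)..π, A (π, y)) = ∫ y in (-π : ℝ)..π, A (-π, y) := by
    apply intervalIntegral.integral_congr
    intro y hy
    exact hAper y (by rwa [Set.uIcc_of_le (by linarith [pi_pos])] at hy)
  simp only [hb1, hb2, hb3]
  ring

lemma hasDerivAt_posSq (y : ℝ) : HasDerivAt (fun z => max z 0 ^ 2) (2 * max y 0) y := by
  rcases lt_trichotomy y 0 with hy | hy | hy
  · have h : (fun z : ℝ => max z 0 ^ 2) =ᶠ[𝓝 y] fun _ => (0 : ℝ) := by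
      filter_upwards [Iio_mem_nhds hy] with z hz
      simp [max_eq_right (le_of_lt (Set.mem_Iio.1 hz))]
    have h0 : HasDerivAt (fun _ : ℝ => (0 : ℝ)) 0 y := hasDerivAt_const y 0
    simpa [max_eq_right hy.le] using h0.congr_of_eventuallyEq h
  · subst hy
    rw [hasDerivAt_iff_isLittleO]
    simp only [max_self, ne_eq, OfNat.ofNat_ne_zero, not_false_eq_true, zero_pow, sub_zero,
      zero_mul, smul_eq_mul, mul_zero]
    rw [Asymptotics.isLittleO_iff]
    intro c hc
    filter_upwards [Metric.closedBall_mem_nhds (0:ℝ) hc] with z hz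
    simp only [Metric.mem_closedBall, Real.dist_eq, sub_zero] at hz
    have h1 : |max z 0 ^ 2| ≤ |z| * |z| := by
      rcases le_or_gt z 0 with h | h
      · rw [max_eq_right h]
        simpa using mul_nonneg (abs_nonneg z) (abs_nonneg z)
      · rw [max_eq_left h.le, abs_of_nonneg (by positivity), sq]
        exact mul_le_mul (le_abs_self z) (le_abs_self z) h.le (abs_nonneg z)
    calc ‖max z 0 ^ 2‖ ≤ |z| * |z| := h1
      _ ≤ c * ‖z‖ := mul_le_mul_of_nonneg_right hz (abs_nonneg z)
  · have h : (fun z : ℝ => max z 0 ^ 2) =ᶠ[𝓝 y] fun z => z ^ 2 := by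
      filter_upwards [Ioi_mem_nhds hy] with z hz
      simp [max_eq_left (le_of_lt (Set.mem_Ioi.1 hz))]
    have h0 : HasDerivAt (fun z : ℝ => z ^ 2) (2 * y) y := by
      simpa using hasDerivAt_pow 2 y
    simpa [max_eq_left hy.le] using h0.congr_of_eventuallyEq h

lemma contDiff_one_posSq : ContDiff ℝ 1 (fun z : ℝ => max z 0 ^ 2) := by
  rw [contDiff_one_iff_deriv]
  refine ⟨fun y => (hasDerivAt_posSq y).differentiableAt, ?_⟩
  rw [show deriv (fun z : ℝ => max z 0 ^ 2) = fun y => 2 * max y 0 from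
    funext fun y => (hasDerivAt_posSq y).deriv]
  exact continuous_const.mul (continuous_id.max continuous_const)

/-- Every neighborhood of a point of `QS` intersects `QS` in positive measure. -/
lemma pos_measure_nbhd {x₀ : Pt} (hx : x₀ ∈ QS) {U : Set Pt} (hU : IsOpen U) (hxU : x₀ ∈ U) :
    0 < volume (U ∩ QS) := by
  obtain ⟨ε, hε, hball⟩ := Metric.isOpen_iff.1 hU x₀ hxU
  set δ : ℝ := min (ε / 2) π with hδdef
  have hδ : 0 < δ := lt_min (by linarith) pi_pos
  have hδε : δ < ε := lt_of_le_of_lt (min_le_left _ _) (by linarith)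
  obtain ⟨⟨hx1l, hx1r⟩, ⟨hx2l, hx2r⟩⟩ := hx
  set a₁ := max (x₀.1 - δ) (-π)
  set b₁ := min (x₀.1 + δ) π
  set a₂ := max (x₀.2 - δ) (-π)
  set b₂ := min (x₀.2 + δ) π
  have hab₁ : a₁ < b₁ := by
    apply max_lt <;> apply lt_min <;> linarith [pi_pos]
  have hab₂ : a₂ < b₂ := by
    apply max_lt <;> apply lt_min <;> linarith [pi_pos]
  have hsub : Set.Icc a₁ b₁ ×ˢ Set.Icc a₂ b₂ ⊆ U ∩ QS := by
    rintro ⟨y₁, y₂⟩ ⟨⟨h1l, h1r⟩, ⟨h2l, h2r⟩⟩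
    simp only [a₁, b₁, a₂, b₂, le_max_iff, min_le_iff, max_le_iff, le_min_iff] at h1l h1r h2l h2r
    constructor
    · apply hball
      simp only [Metric.mem_ball, Prod.dist_eq, Real.dist_eq]
      apply max_lt <;> rw [abs_sub_lt_iff] <;> constructor <;> linarith [h1l.1, h1r.1, h2l.1, h2r.1]
    · exact ⟨⟨h1l.2, h1r.2⟩, ⟨h2l.2, h2r.2⟩⟩
  calc (0 : ℝ≥0∞) < volume (Set.Icc a₁ b₁ ×ˢ Set.Icc a₂ b₂) := by
        rw [show (volume : Measure Pt) = (volume : Measure ℝ).prod volume from rfl]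
        rw [Measure.prod_prod, Real.volume_Icc, Real.volume_Icc]
        apply ENNReal.mul_pos <;> simp [hab₁, hab₂]
      _ ≤ volume (U ∩ QS) := measure_mono hsub

lemma eq_zero_of_integral_zero {f : Pt → ℝ} (hf : Continuous f)
    (hnn : ∀ x ∈ QS, 0 ≤ f x) (hz : ∫ x in QS, f x = 0) : ∀ x ∈ QS, f x = 0 := by
  intro x₀ hx₀
  by_contra hne
  have hpos : 0 < f x₀ := lt_of_le_of_ne (hnn x₀ hx₀) (Ne.symm hne)
  have hint : IntegrableOn f QS := hf.continuousOn.integrableOn_compact isCompact_QS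
  set U : Set Pt := {y | 0 < f y} with hU
  have hUopen : IsOpen U := isOpen_lt continuous_const hf
  have hμ : 0 < volume (U ∩ QS) := pos_measure_nbhd hx₀ hUopen hpos
  have hsupp : U ∩ QS ⊆ Function.support f ∩ QS := by
    rintro y ⟨hy1, hy2⟩
    exact ⟨ne_of_gt hy1, hy2⟩
  have hpos2 : 0 < ∫ x in QS, f x := by
    rw [setIntegral_pos_iff_support_of_nonneg_ae _ hint]
    · exact lt_of_lt_of_le hμ (measure_mono hsupp)
    · exact (ae_restrict_iff' measurableSet_QS).2 (Filter.Eventually.of_forall hnn)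
  linarith [hz ▸ hpos2]

lemma integral_abs_snd : ∫ x in QS, |x.2| = 2 * π ^ 3 := by
  have hint : IntegrableOn (fun x : Pt => |x.2|) QS :=
    (continuous_snd.abs).continuousOn.integrableOn_compact isCompact_QS
  rw [QS] at hint ⊢
  rw [Measure.volume_eq_prod] at hint ⊢
  rw [setIntegral_prod _ hint]
  have inner : (∫ y in Set.Icc (-π) π, |y|) = π ^ 2 := by
    have h1 : (∫ y in Set.Icc (-π) π, |y|) = ∫ y in (-π : ℝ)..π, |y| := by
      rw [intervalIntegral.integral_of_le (by linarith [pi_pos]),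
        ← integral_Icc_eq_integral_Ioc]
    rw [h1]
    have hi : ∀ a b : ℝ, IntervalIntegrable (fun y : ℝ => |y|) volume a b :=
      fun a b => (continuous_abs).intervalIntegrable a b
    rw [← intervalIntegral.integral_add_adjacent_intervals (b := 0) (hi _ _) (hi _ _)]
    have h2 : (∫ y in (0:ℝ)..π, |y|) = π ^ 2 / 2 := by
      rw [intervalIntegral.integral_congr (g := fun y : ℝ => y)]
      · rw [integral_id]; ring
      · intro y hy
        rw [Set.uIcc_of_le (le_of_lt pi_pos)] at hy
        exact abs_of_nonneg hy.1
    have h3 : (∫ y in (-π : ℝ)..0, |y|) = π ^ 2 / 2 := by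
      rw [intervalIntegral.integral_congr (g := fun y : ℝ => -y)]
      · rw [intervalIntegral.integral_neg, integral_id]; ring
      · intro y hy
        rw [Set.uIcc_of_le (by linarith [pi_pos])] at hy
        exact abs_of_nonpos hy.2
    rw [h2, h3]; ring
  simp only [inner]
  rw [setIntegral_const, Real.volume_real_Icc_of_le (by linarith [pi_pos]), smul_eq_mul]
  ring

lemma Ioi_eq_iUnion : Set.Ioi (0:ℝ) = ⋃ n : ℕ, Set.Ioc (n : ℝ) (n + 1) := by
  ext t
  simp only [Set.mem_Ioi, Set.mem_iUnion, Set.mem_Ioc]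
  constructor
  · intro ht
    refine ⟨⌈t⌉₊ - 1, ?_, ?_⟩
    · have h1 : (⌈t⌉₊ : ℝ) < t + 1 := Nat.ceil_lt_add_one ht.le
      have h2 : 1 ≤ ⌈t⌉₊ := Nat.one_le_ceil_iff.2 ht
      rw [Nat.cast_sub h2]
      push_cast
      linarith
    · have h2 : 1 ≤ ⌈t⌉₊ := Nat.one_le_ceil_iff.2 ht
      rw [Nat.cast_sub h2]
      push_cast
      have := Nat.le_ceil t
      linarith
  · rintro ⟨n, hn, -⟩
    exact lt_of_le_of_lt (by positivity) hn

lemma Ioc_pairwise_disjoint :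
    Pairwise (Function.onFun Disjoint fun n : ℕ => Set.Ioc (n : ℝ) (n + 1)) := by
  intro m n hmn
  rw [Function.onFun, Set.Ioc_disjoint_Ioc]
  rcases hmn.lt_or_gt with h | h
  · refine le_trans (min_le_left _ _) (le_max_of_le_right ?_)
    exact_mod_cast Nat.succ_le_of_lt h
  · refine le_trans (min_le_right _ _) (le_max_of_le_left ?_)
    exact_mod_cast Nat.succ_le_of_lt h

end AuxIPM

section Keys

variable {ρ : Pt → ℝ → ℝ} {u : Pt → ℝ → Pt} {p : Pt → ℝ → ℝ}

lemma rho_t_eq (hsol : IsIPMSolS ρ u p) (x : Pt) (t : ℝ) :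
    deriv (fun τ => ρ x τ) t
      = fderiv ℝ (fun q : Pt × ℝ => ρ q.1 q.2) (x, t) ((0, 0), 1) :=
  (sliceT (hsol.smooth_rho.differentiable (by norm_num)) x.1 x.2 t).deriv

lemma key1 (hsol : IsIPMSolS ρ u p) (t : ℝ) (ht : 0 ≤ t) :
    ∫ x in QS, x.2 * deriv (fun τ => ρ x τ) t = ∫ x in QS, ρ x t * (u x t).2 := by
  have hρd : Differentiable ℝ (fun q : Pt × ℝ => ρ q.1 q.2) :=
    hsol.smooth_rho.differentiable (by norm_num)
  have hu1s : ContDiff ℝ (⊤ : ℕ∞) (fun q : Pt × ℝ => (u q.1 q.2).1) :=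
    contDiff_fst.comp hsol.smooth_u
  have hu2s : ContDiff ℝ (⊤ : ℕ∞) (fun q : Pt × ℝ => (u q.1 q.2).2) :=
    contDiff_snd.comp hsol.smooth_u
  have hu1d : Differentiable ℝ (fun q : Pt × ℝ => (u q.1 q.2).1) := hu1s.differentiable (by norm_num)
  have hu2d : Differentiable ℝ (fun q : Pt × ℝ => (u q.1 q.2).2) := hu2s.differentiable (by norm_num)
  have hρt : ContDiff ℝ 1 (fun y : Pt => ρ y t) :=
    (hsol.smooth_rho.of_le (by norm_num)).comp (contDiff_id.prodMk contDiff_const)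
  have hu1t : ContDiff ℝ 1 (fun y : Pt => (u y t).1) :=
    (hu1s.of_le (by norm_num)).comp (contDiff_id.prodMk contDiff_const)
  have hu2t : ContDiff ℝ 1 (fun y : Pt => (u y t).2) :=
    (hu2s.of_le (by norm_num)).comp (contDiff_id.prodMk contDiff_const)
  set A : Pt → ℝ := fun y => y.2 * ρ y t * (u y t).1 with hA
  set B : Pt → ℝ := fun y => y.2 * ρ y t * (u y t).2 with hB
  have hAc : ContDiff ℝ 1 A := (contDiff_snd.mul hρt).mul hu1t
  have hBc : ContDiff ℝ 1 B := (contDiff_snd.mul hρt).mul hu2t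
  have hdiv : ∫ x in QS, (pd1 A x + pd2 B x) = 0 := by
    apply div_QS hAc hBc
    · intro y hy
      simp only [hA]
      rw [per_endpoint (hsol.per_rho t ht) y, per_endpoint (hsol.per_u1 t ht) y]
    · intro z hz
      simp only [hB, hsol.noflow_top z t ht, mul_zero]
    · intro z hz
      simp only [hB, hsol.noflow_bot z t ht, mul_zero]
  have hident : ∀ x ∈ QS,
      pd1 A x + pd2 B x = ρ x t * (u x t).2 - x.2 * deriv (fun τ => ρ x τ) t := by
    rintro ⟨x₁, x₂⟩ hx
    have e1 : pd1 A (x₁, x₂)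
        = (x₂ * fderiv ℝ (fun q : Pt × ℝ => ρ q.1 q.2) ((x₁, x₂), t) ((1,0),0)) * (u (x₁,x₂) t).1
          + (x₂ * ρ (x₁, x₂) t)
            * fderiv ℝ (fun q : Pt × ℝ => (u q.1 q.2).1) ((x₁, x₂), t) ((1,0),0) :=
      (((slice1 hρd x₁ x₂ t).const_mul x₂).mul (slice1 hu1d x₁ x₂ t)).deriv
    have e2 : pd2 B (x₁, x₂)
        = (1 * ρ (x₁, x₂) t
            + x₂ * fderiv ℝ (fun q : Pt × ℝ => ρ q.1 q.2) ((x₁, x₂), t) ((0,1),0))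
              * (u (x₁,x₂) t).2
          + (x₂ * ρ (x₁, x₂) t)
            * fderiv ℝ (fun q : Pt × ℝ => (u q.1 q.2).2) ((x₁, x₂), t) ((0,1),0) :=
      (((hasDerivAt_id x₂).mul (slice2 hρd x₁ x₂ t)).mul (slice2 hu2d x₁ x₂ t)).deriv
    have hTr := hsol.transport (x₁, x₂) hx.2 t ht
    rw [show pd1 (fun y => ρ y t) (x₁, x₂)
        = fderiv ℝ (fun q : Pt × ℝ => ρ q.1 q.2) ((x₁, x₂), t) ((1,0),0) from
        (slice1 hρd x₁ x₂ t).deriv,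
      show pd2 (fun y => ρ y t) (x₁, x₂)
        = fderiv ℝ (fun q : Pt × ℝ => ρ q.1 q.2) ((x₁, x₂), t) ((0,1),0) from
        (slice2 hρd x₁ x₂ t).deriv] at hTr
    have hInc := hsol.incomp (x₁, x₂) hx.2 t ht
    rw [show pd1 (fun y => (u y t).1) (x₁, x₂)
        = fderiv ℝ (fun q : Pt × ℝ => (u q.1 q.2).1) ((x₁, x₂), t) ((1,0),0) from
        (slice1 hu1d x₁ x₂ t).deriv,
      show pd2 (fun y => (u y t).2) (x₁, x₂)
        = fderiv ℝ (fun q : Pt × ℝ => (u q.1 q.2).2) ((x₁, x₂), t) ((0,1),0) from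
        (slice2 hu2d x₁ x₂ t).deriv] at hInc
    rw [e1, e2]
    linear_combination x₂ * hTr + (x₂ * ρ (x₁, x₂) t) * hInc
  rw [setIntegral_congr_fun measurableSet_QS hident] at hdiv
  have hInt1 : IntegrableOn (fun x : Pt => ρ x t * (u x t).2) QS :=
    ((hρt.continuous).mul (hu2t.continuous)).continuousOn.integrableOn_compact isCompact_QS
  have hInt2 : IntegrableOn (fun x : Pt => x.2 * deriv (fun τ => ρ x τ) t) QS := by
    have h2 : Continuous (fun x : Pt =>
        fderiv ℝ (fun q : Pt × ℝ => ρ q.1 q.2) (x, t) ((0,0),1)) :=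
      (cont_dirDeriv hsol.smooth_rho ((0,0),1)).comp (continuous_id.prodMk continuous_const)
    have hc : Continuous (fun x : Pt => x.2 * deriv (fun τ => ρ x τ) t) :=
      continuous_snd.mul (by simpa only [← rho_t_eq hsol] using h2)
    exact hc.continuousOn.integrableOn_compact isCompact_QS
  rw [integral_sub hInt1 hInt2, sub_eq_zero] at hdiv
  exact hdiv.symm

lemma key2 (hsol : IsIPMSolS ρ u p) (t : ℝ) (ht : 0 ≤ t) :
    ∫ x in QS, ρ x t * (u x t).2
      = -∫ x in QS, ((u x t).1 ^ 2 + (u x t).2 ^ 2) := by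
  have hpd : Differentiable ℝ (fun q : Pt × ℝ => p q.1 q.2) :=
    hsol.smooth_p.differentiable (by norm_num)
  have hu1s : ContDiff ℝ (⊤ : ℕ∞) (fun q : Pt × ℝ => (u q.1 q.2).1) :=
    contDiff_fst.comp hsol.smooth_u
  have hu2s : ContDiff ℝ (⊤ : ℕ∞) (fun q : Pt × ℝ => (u q.1 q.2).2) :=
    contDiff_snd.comp hsol.smooth_u
  have hu1d : Differentiable ℝ (fun q : Pt × ℝ => (u q.1 q.2).1) :=
    hu1s.differentiable (by norm_num)
  have hu2d : Differentiable ℝ (fun q : Pt × ℝ => (u q.1 q.2).2) :=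
    hu2s.differentiable (by norm_num)
  have hpt : ContDiff ℝ 1 (fun y : Pt => p y t) :=
    (hsol.smooth_p.of_le (by norm_num)).comp (contDiff_id.prodMk contDiff_const)
  have hu1t : ContDiff ℝ 1 (fun y : Pt => (u y t).1) :=
    (hu1s.of_le (by norm_num)).comp (contDiff_id.prodMk contDiff_const)
  have hu2t : ContDiff ℝ 1 (fun y : Pt => (u y t).2) :=
    (hu2s.of_le (by norm_num)).comp (contDiff_id.prodMk contDiff_const)
  have hρt : ContDiff ℝ 1 (fun y : Pt => ρ y t) :=
    (hsol.smooth_rho.of_le (by norm_num)).comp (contDiff_id.prodMk contDiff_const)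
  set A : Pt → ℝ := fun y => p y t * (u y t).1 with hA
  set B : Pt → ℝ := fun y => p y t * (u y t).2 with hB
  have hAc : ContDiff ℝ 1 A := hpt.mul hu1t
  have hBc : ContDiff ℝ 1 B := hpt.mul hu2t
  have hdiv : ∫ x in QS, (pd1 A x + pd2 B x) = 0 := by
    apply div_QS hAc hBc
    · intro y hy
      simp only [hA]
      rw [per_endpoint (hsol.per_p t ht) y, per_endpoint (hsol.per_u1 t ht) y]
    · intro z hz
      simp only [hB, hsol.noflow_top z t ht, mul_zero]
    · intro z hz
      simp only [hB, hsol.noflow_bot z t ht, mul_zero]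
  have hident : ∀ x ∈ QS, pd1 A x + pd2 B x
      = -(ρ x t * (u x t).2) - ((u x t).1 ^ 2 + (u x t).2 ^ 2) := by
    rintro ⟨x₁, x₂⟩ hx
    have e1 : pd1 A (x₁, x₂)
        = fderiv ℝ (fun q : Pt × ℝ => p q.1 q.2) ((x₁, x₂), t) ((1,0),0) * (u (x₁,x₂) t).1
          + p (x₁, x₂) t
            * fderiv ℝ (fun q : Pt × ℝ => (u q.1 q.2).1) ((x₁, x₂), t) ((1,0),0) :=
      ((slice1 hpd x₁ x₂ t).mul (slice1 hu1d x₁ x₂ t)).deriv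
    have e2 : pd2 B (x₁, x₂)
        = fderiv ℝ (fun q : Pt × ℝ => p q.1 q.2) ((x₁, x₂), t) ((0,1),0) * (u (x₁,x₂) t).2
          + p (x₁, x₂) t
            * fderiv ℝ (fun q : Pt × ℝ => (u q.1 q.2).2) ((x₁, x₂), t) ((0,1),0) :=
      ((slice2 hpd x₁ x₂ t).mul (slice2 hu2d x₁ x₂ t)).deriv
    have hD1 := hsol.darcy1 (x₁, x₂) hx.2 t ht
    rw [show pd1 (fun y => p y t) (x₁, x₂)
        = fderiv ℝ (fun q : Pt × ℝ => p q.1 q.2) ((x₁, x₂), t) ((1,0),0) from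
        (slice1 hpd x₁ x₂ t).deriv] at hD1
    have hD2 := hsol.darcy2 (x₁, x₂) hx.2 t ht
    rw [show pd2 (fun y => p y t) (x₁, x₂)
        = fderiv ℝ (fun q : Pt × ℝ => p q.1 q.2) ((x₁, x₂), t) ((0,1),0) from
        (slice2 hpd x₁ x₂ t).deriv] at hD2
    have hInc := hsol.incomp (x₁, x₂) hx.2 t ht
    rw [show pd1 (fun y => (u y t).1) (x₁, x₂)
        = fderiv ℝ (fun q : Pt × ℝ => (u q.1 q.2).1) ((x₁, x₂), t) ((1,0),0) from
        (slice1 hu1d x₁ x₂ t).deriv,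
      show pd2 (fun y => (u y t).2) (x₁, x₂)
        = fderiv ℝ (fun q : Pt × ℝ => (u q.1 q.2).2) ((x₁, x₂), t) ((0,1),0) from
        (slice2 hu2d x₁ x₂ t).deriv] at hInc
    rw [e1, e2]
    linear_combination (u (x₁, x₂) t).1 * hD1 + (u (x₁, x₂) t).2 * hD2
      + p (x₁, x₂) t * hInc
  rw [setIntegral_congr_fun measurableSet_QS hident] at hdiv
  have hInt1 : IntegrableOn (fun x : Pt => -(ρ x t * (u x t).2)) QS :=
    (((hρt.continuous).mul (hu2t.continuous)).neg).continuousOn.integrableOn_compact isCompact_QS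
  have hInt2 : IntegrableOn (fun x : Pt => ((u x t).1 ^ 2 + (u x t).2 ^ 2)) QS :=
    (((hu1t.continuous).pow 2).add ((hu2t.continuous).pow 2)).continuousOn.integrableOn_compact
      isCompact_QS
  rw [integral_sub hInt1 hInt2, sub_eq_zero] at hdiv
  rw [show (fun x : Pt => -(ρ x t * (u x t).2)) = fun x : Pt => -(ρ x t * (u x t).2) from rfl,
    integral_neg] at hdiv
  linarith [hdiv]


lemma E_hasDerivAt (hsol : IsIPMSolS ρ u p) (t : ℝ) :
    HasDerivAt (fun τ => ∫ x in QS, x.2 * ρ x τ)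
      (∫ x in QS, x.2 * deriv (fun τ' => ρ x τ') t) t := by
  have hρd : Differentiable ℝ (fun q : Pt × ℝ => ρ q.1 q.2) :=
    hsol.smooth_rho.differentiable (by norm_num)
  apply param_hasDerivAt (H := fun x τ => x.2 * ρ x τ)
    (H' := fun x τ => x.2 * deriv (fun τ' => ρ x τ') τ)
  · exact (continuous_snd.comp continuous_fst).mul hsol.smooth_rho.continuous
  · have h2 : Continuous (fun q : Pt × ℝ =>
        fderiv ℝ (fun q : Pt × ℝ => ρ q.1 q.2) q ((0,0),1)) :=
      cont_dirDeriv hsol.smooth_rho ((0,0),1)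
    exact (continuous_snd.comp continuous_fst).mul
      (by simpa only [← rho_t_eq hsol] using h2)
  · intro x τ
    have h := (sliceT hρd x.1 x.2 τ).const_mul x.2
    rw [← rho_t_eq hsol x τ] at h
    exact h

lemma D_cont (hsol : IsIPMSolS ρ u p) :
    Continuous fun t => ∫ x in QS, ((u x t).1 ^ 2 + (u x t).2 ^ 2) := by
  apply param_cont
  have h1 : Continuous (fun q : Pt × ℝ => (u q.1 q.2).1) :=
    continuous_fst.comp hsol.smooth_u.continuous
  have h2 : Continuous (fun q : Pt × ℝ => (u q.1 q.2).2) :=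
    continuous_snd.comp hsol.smooth_u.continuous
  exact (h1.pow 2).add (h2.pow 2)

lemma D_nonneg (t : ℝ) : 0 ≤ ∫ x in QS, ((u x t).1 ^ 2 + (u x t).2 ^ 2) :=
  setIntegral_nonneg measurableSet_QS fun x _ => by positivity

lemma max_principle (hsol : IsIPMSolS ρ u p) (M : ℝ) (hM0 : 0 ≤ M)
    (hM : ∀ x ∈ QS, |ρ x 0| ≤ M) :
    ∀ t, 0 ≤ t → ∀ x ∈ QS, |ρ x t| ≤ M := by
  have hρd : Differentiable ℝ (fun q : Pt × ℝ => ρ q.1 q.2) :=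
    hsol.smooth_rho.differentiable (by norm_num)
  have hρc : Continuous (fun q : Pt × ℝ => ρ q.1 q.2) := hsol.smooth_rho.continuous
  have hu1s : ContDiff ℝ (⊤ : ℕ∞) (fun q : Pt × ℝ => (u q.1 q.2).1) :=
    contDiff_fst.comp hsol.smooth_u
  have hu2s : ContDiff ℝ (⊤ : ℕ∞) (fun q : Pt × ℝ => (u q.1 q.2).2) :=
    contDiff_snd.comp hsol.smooth_u
  have hu1d : Differentiable ℝ (fun q : Pt × ℝ => (u q.1 q.2).1) :=
    hu1s.differentiable (by norm_num)
  have hu2d : Differentiable ℝ (fun q : Pt × ℝ => (u q.1 q.2).2) :=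
    hu2s.differentiable (by norm_num)
  -- the C¹ function F and its derivative F'
  set F : ℝ → ℝ := fun s => max (s ^ 2 - M ^ 2) 0 ^ 2 with hFdef
  set F' : ℝ → ℝ := fun s => 2 * max (s ^ 2 - M ^ 2) 0 * (2 * s) with hF'def
  have hF : ∀ s, HasDerivAt F (F' s) s := by
    intro s
    have h2 : HasDerivAt (fun s : ℝ => s ^ 2 - M ^ 2) (2 * s) s := by
      simpa using (hasDerivAt_pow 2 s).sub_const (M ^ 2)
    exact (hasDerivAt_posSq (s ^ 2 - M ^ 2)).comp s h2
  have hFc : ContDiff ℝ 1 F :=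
    contDiff_one_posSq.comp ((contDiff_id.pow 2).sub contDiff_const)
  have hF'c : Continuous F' :=
    (continuous_const.mul (((continuous_pow 2).sub continuous_const).max
      continuous_const)).mul (continuous_const.mul continuous_id)
  have hFnn : ∀ s, 0 ≤ F s := fun s => by positivity
  -- the functional φ
  set φ : ℝ → ℝ := fun t => ∫ x in QS, F (ρ x t) with hφdef
  have hφd : ∀ t, HasDerivAt φ (∫ x in QS, F' (ρ x t) * deriv (fun τ => ρ x τ) t) t := by
    intro t
    apply param_hasDerivAt (H := fun x τ => F (ρ x τ))
      (H' := fun x τ => F' (ρ x τ) * deriv (fun τ' => ρ x τ') τ)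
    · exact hFc.continuous.comp hρc
    · have h2 : Continuous (fun q : Pt × ℝ =>
          fderiv ℝ (fun q : Pt × ℝ => ρ q.1 q.2) q ((0,0),1)) :=
        cont_dirDeriv hsol.smooth_rho ((0,0),1)
      exact (hF'c.comp hρc).mul (by simpa only [← rho_t_eq hsol] using h2)
    · intro x τ
      have h := (hF (ρ x τ)).comp τ (sliceT hρd x.1 x.2 τ)
      rw [← rho_t_eq hsol x τ] at h
      exact h
  have hφ'zero : ∀ t, 0 ≤ t → (∫ x in QS, F' (ρ x t) * deriv (fun τ => ρ x τ) t) = 0 := by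
    intro t ht
    have hu1t : ContDiff ℝ 1 (fun y : Pt => (u y t).1) :=
      (hu1s.of_le (by norm_num)).comp (contDiff_id.prodMk contDiff_const)
    have hu2t : ContDiff ℝ 1 (fun y : Pt => (u y t).2) :=
      (hu2s.of_le (by norm_num)).comp (contDiff_id.prodMk contDiff_const)
    have hρt : ContDiff ℝ 1 (fun y : Pt => ρ y t) :=
      (hsol.smooth_rho.of_le (by norm_num)).comp (contDiff_id.prodMk contDiff_const)
    set A : Pt → ℝ := fun y => F (ρ y t) * (u y t).1 with hA
    set B : Pt → ℝ := fun y => F (ρ y t) * (u y t).2 with hB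
    have hAc : ContDiff ℝ 1 A := (hFc.comp hρt).mul hu1t
    have hBc : ContDiff ℝ 1 B := (hFc.comp hρt).mul hu2t
    have hdiv : ∫ x in QS, (pd1 A x + pd2 B x) = 0 := by
      apply div_QS hAc hBc
      · intro y hy
        simp only [hA]
        rw [per_endpoint (hsol.per_rho t ht) y, per_endpoint (hsol.per_u1 t ht) y]
      · intro z hz
        simp only [hB, hsol.noflow_top z t ht, mul_zero]
      · intro z hz
        simp only [hB, hsol.noflow_bot z t ht, mul_zero]
    have hident : ∀ x ∈ QS, pd1 A x + pd2 B x
        = -(F' (ρ x t) * deriv (fun τ => ρ x τ) t) := by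
      rintro ⟨x₁, x₂⟩ hx
      have e1 : pd1 A (x₁, x₂)
          = (F' (ρ (x₁, x₂) t)
              * fderiv ℝ (fun q : Pt × ℝ => ρ q.1 q.2) ((x₁, x₂), t) ((1,0),0))
                * (u (x₁,x₂) t).1
            + F (ρ (x₁, x₂) t)
              * fderiv ℝ (fun q : Pt × ℝ => (u q.1 q.2).1) ((x₁, x₂), t) ((1,0),0) :=
        by
          have h := ((hF (ρ (x₁, x₂) t)).comp x₁ (slice1 hρd x₁ x₂ t)).mul
            (slice1 hu1d x₁ x₂ t)
          exact h.deriv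
      have e2 : pd2 B (x₁, x₂)
          = (F' (ρ (x₁, x₂) t)
              * fderiv ℝ (fun q : Pt × ℝ => ρ q.1 q.2) ((x₁, x₂), t) ((0,1),0))
                * (u (x₁,x₂) t).2
            + F (ρ (x₁, x₂) t)
              * fderiv ℝ (fun q : Pt × ℝ => (u q.1 q.2).2) ((x₁, x₂), t) ((0,1),0) :=
        by
          have h := ((hF (ρ (x₁, x₂) t)).comp x₂ (slice2 hρd x₁ x₂ t)).mul
            (slice2 hu2d x₁ x₂ t)
          exact h.deriv
      have hTr := hsol.transport (x₁, x₂) hx.2 t ht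
      rw [show pd1 (fun y => ρ y t) (x₁, x₂)
          = fderiv ℝ (fun q : Pt × ℝ => ρ q.1 q.2) ((x₁, x₂), t) ((1,0),0) from
          (slice1 hρd x₁ x₂ t).deriv,
        show pd2 (fun y => ρ y t) (x₁, x₂)
          = fderiv ℝ (fun q : Pt × ℝ => ρ q.1 q.2) ((x₁, x₂), t) ((0,1),0) from
          (slice2 hρd x₁ x₂ t).deriv] at hTr
      have hInc := hsol.incomp (x₁, x₂) hx.2 t ht
      rw [show pd1 (fun y => (u y t).1) (x₁, x₂)
          = fderiv ℝ (fun q : Pt × ℝ => (u q.1 q.2).1) ((x₁, x₂), t) ((1,0),0) from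
          (slice1 hu1d x₁ x₂ t).deriv,
        show pd2 (fun y => (u y t).2) (x₁, x₂)
          = fderiv ℝ (fun q : Pt × ℝ => (u q.1 q.2).2) ((x₁, x₂), t) ((0,1),0) from
          (slice2 hu2d x₁ x₂ t).deriv] at hInc
      rw [e1, e2]
      linear_combination F' (ρ (x₁, x₂) t) * hTr + F (ρ (x₁, x₂) t) * hInc
    rw [setIntegral_congr_fun measurableSet_QS hident, integral_neg, neg_eq_zero] at hdiv
    exact hdiv
  -- φ is antitone on [0, ∞), nonnegative, and vanishes at 0; hence vanishes on [0, ∞)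
  have hφanti : AntitoneOn φ (Set.Ici 0) := by
    apply antitoneOn_of_deriv_nonpos (convex_Ici 0)
    · exact fun t _ => ((hφd t).continuousAt).continuousWithinAt
    · exact fun t _ => ((hφd t).differentiableAt).differentiableWithinAt
    · intro t hti
      rw [interior_Ici] at hti
      rw [(hφd t).deriv, hφ'zero t (le_of_lt hti)]
  have hφ0 : φ 0 = 0 := by
    have hz : ∀ x ∈ QS, F (ρ x 0) = 0 := by
      intro x hx
      have h1 : ρ x 0 ^ 2 - M ^ 2 ≤ 0 := by
        have := hM x hx
        nlinarith [abs_nonneg (ρ x 0), sq_abs (ρ x 0)]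
      simp only [hFdef]
      rw [max_eq_right h1]
      norm_num
    show (∫ x in QS, F (ρ x 0)) = 0
    rw [setIntegral_congr_fun measurableSet_QS hz]
    simp
  have hφzero : ∀ t, 0 ≤ t → φ t = 0 := by
    intro t ht
    have h1 : φ t ≤ 0 := hφ0 ▸ hφanti (Set.mem_Ici.2 le_rfl) ht ht
    have h2 : 0 ≤ φ t := setIntegral_nonneg measurableSet_QS fun x _ => hFnn _
    linarith
  -- conclude pointwise bound
  intro t ht x hx
  have hzero : ∀ y ∈ QS, F (ρ y t) = 0 := by
    apply eq_zero_of_integral_zero (hFc.continuous.comp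
      (hρc.comp (continuous_id.prodMk continuous_const)))
      (fun y _ => hFnn _) (hφzero t ht)
  have h3 := hzero x hx
  simp only [hFdef] at h3
  have h4 : max (ρ x t ^ 2 - M ^ 2) 0 = 0 := by
    have := sq_eq_zero_iff.1 h3
    exact this
  have h5 : ρ x t ^ 2 - M ^ 2 ≤ 0 := by
    by_contra hcon
    push_neg at hcon
    rw [max_eq_left (le_of_lt hcon)] at h4
    linarith
  exact abs_le_of_sq_le_sq (by linarith) hM0

end Keys

/-- On the strip `S = T × [-π,π]`, along any global smooth solution of IPM,
`E(t) = ∫_S x₂ ρ(x,t) dx` satisfies `E'(t) = -∫_S |u(x,t)|² dx` for `t ≥ 0`; in particular `E` is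
nonincreasing on `[0,∞)` and `∫₀^∞ ∫_S |u|² dx dt ≤ E(0) + 2π³ sup|ρ₀|`. -/
theorem ipm_strip_energy
    (ρ₀ : Pt → ℝ) (hρ₀smooth : ContDiff ℝ (⊤ : ℕ∞) ρ₀) (hρ₀per : Per1 ρ₀)
    (ρ : Pt → ℝ → ℝ) (u : Pt → ℝ → Pt) (p : Pt → ℝ → ℝ)
    (hsol : IsIPMSolS ρ u p)
    (hinit : ∀ x : Pt, ρ x 0 = ρ₀ x) :
    (∀ t : ℝ, 0 ≤ t →
        HasDerivWithinAt (fun τ => ∫ x in QS, x.2 * ρ x τ)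
          (-(∫ x in QS, ((u x t).1 ^ 2 + (u x t).2 ^ 2))) (Set.Ici 0) t)
    ∧ AntitoneOn (fun τ => ∫ x in QS, x.2 * ρ x τ) (Set.Ici 0)
    ∧ ∫⁻ t in Set.Ioi (0 : ℝ),
          ENNReal.ofReal (∫ x in QS, ((u x t).1 ^ 2 + (u x t).2 ^ 2))
        ≤ ENNReal.ofReal ((∫ x in QS, x.2 * ρ₀ x) + 2 * π ^ 3 * ⨆ x : ↥QS, |ρ₀ ↑x|) := by
  -- energy derivative at nonnegative times
  have hEd : ∀ t : ℝ, 0 ≤ t → HasDerivAt (fun τ => ∫ x in QS, x.2 * ρ x τ)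
      (-(∫ x in QS, ((u x t).1 ^ 2 + (u x t).2 ^ 2))) t := by
    intro t ht
    have h := E_hasDerivAt hsol t
    rwa [key1 hsol t ht, key2 hsol t ht] at h
  have hDc := D_cont hsol
  have hDnn : ∀ t : ℝ, 0 ≤ ∫ x in QS, ((u x t).1 ^ 2 + (u x t).2 ^ 2) := fun t =>
    setIntegral_nonneg measurableSet_QS fun x _ => by positivity
  have hanti : AntitoneOn (fun τ => ∫ x in QS, x.2 * ρ x τ) (Set.Ici 0) := by
    apply antitoneOn_of_deriv_nonpos (convex_Ici 0)
    · exact fun t _ => ((E_hasDerivAt hsol t).continuousAt).continuousWithinAt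
    · exact fun t _ => ((E_hasDerivAt hsol t).differentiableAt).differentiableWithinAt
    · intro t hti
      rw [interior_Ici] at hti
      rw [(hEd t (le_of_lt hti)).deriv]
      simpa using hDnn t
  refine ⟨fun t ht => (hEd t ht).hasDerivWithinAt, hanti, ?_⟩
  -- part 3
  set M : ℝ := ⨆ x : ↥QS, |ρ₀ ↑x| with hMdef
  obtain ⟨C, hC⟩ := isCompact_QS.exists_bound_of_continuousOn hρ₀smooth.continuous.continuousOn
  have hbdd : BddAbove (Set.range fun x : ↥QS => |ρ₀ ↑x|) :=
    ⟨C, by rintro _ ⟨x, rfl⟩; exact hC ↑x x.2⟩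
  have hQSne : ((0:ℝ), (0:ℝ)) ∈ QS :=
    ⟨⟨neg_nonpos.2 pi_pos.le, pi_pos.le⟩, ⟨neg_nonpos.2 pi_pos.le, pi_pos.le⟩⟩
  have hM : ∀ x ∈ QS, |ρ₀ x| ≤ M := fun x hx => le_ciSup hbdd ⟨x, hx⟩
  have hM0 : 0 ≤ M := le_trans (abs_nonneg _) (hM _ hQSne)
  have hmax : ∀ t, 0 ≤ t → ∀ x ∈ QS, |ρ x t| ≤ M :=
    max_principle hsol M hM0 fun x hx => by rw [hinit x]; exact hM x hx
  set E : ℝ → ℝ := fun τ => ∫ x in QS, x.2 * ρ x τ with hEdef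
  -- lower bound on the energy
  have hElow : ∀ t : ℝ, 0 ≤ t → -(2 * π ^ 3 * M) ≤ E t := by
    intro t ht
    have hint2 : IntegrableOn (fun x : Pt => x.2 * ρ x t) QS :=
      (continuous_snd.mul (hsol.smooth_rho.continuous.comp
        (continuous_id.prodMk continuous_const))).continuousOn.integrableOn_compact isCompact_QS
    have hint1 : IntegrableOn (fun x : Pt => -(|x.2| * M)) QS :=
      ((continuous_snd.abs.mul continuous_const).neg).continuousOn.integrableOn_compact
        isCompact_QS
    have hle : (∫ x in QS, -(|x.2| * M)) ≤ ∫ x in QS, x.2 * ρ x t := by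
      apply setIntegral_mono_on hint1 hint2 measurableSet_QS
      intro x hx
      have h1 : |x.2 * ρ x t| ≤ |x.2| * M := by
        rw [abs_mul]
        exact mul_le_mul_of_nonneg_left (hmax t ht x hx) (abs_nonneg _)
      have := neg_abs_le (x.2 * ρ x t)
      linarith
    have heq : (∫ x in QS, -(|x.2| * M)) = -(2 * π ^ 3 * M) := by
      rw [integral_neg]
      rw [show (fun x : Pt => |x.2| * M) = fun x : Pt => (fun y : Pt => |y.2|) x * M from rfl]
      rw [integral_mul_const, integral_abs_snd]
    linarith [heq ▸ hle]
  -- fundamental theorem of calculus on each interval [n, n+1]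
  have hFTC : ∀ n : ℕ, (∫ t in (n:ℝ)..((n:ℝ)+1), ∫ x in QS, ((u x t).1 ^ 2 + (u x t).2 ^ 2))
      = E n - E (n + 1) := by
    intro n
    have h1 : ∀ t ∈ Set.uIcc (n:ℝ) ((n:ℝ)+1),
        HasDerivAt E (-(∫ x in QS, ((u x t).1 ^ 2 + (u x t).2 ^ 2))) t := by
      intro t htmem
      rw [Set.uIcc_of_le (by linarith)] at htmem
      exact hEd t (le_trans (Nat.cast_nonneg n) htmem.1)
    have h2 : IntervalIntegrable
        (fun t => -(∫ x in QS, ((u x t).1 ^ 2 + (u x t).2 ^ 2))) volume (n:ℝ) ((n:ℝ)+1) :=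
      (hDc.neg).intervalIntegrable _ _
    have h3 := intervalIntegral.integral_eq_sub_of_hasDerivAt h1 h2
    rw [intervalIntegral.integral_neg] at h3
    have : ((n : ℝ) + 1) = ((n + 1 : ℕ) : ℝ) := by push_cast; ring
    rw [this] at h3 ⊢
    linarith [h3]
  have hIoc : ∀ n : ℕ, (∫⁻ t in Set.Ioc (n:ℝ) ((n:ℝ)+1),
      ENNReal.ofReal (∫ x in QS, ((u x t).1 ^ 2 + (u x t).2 ^ 2)))
      = ENNReal.ofReal (E n - E (n + 1)) := by
    intro n
    rw [← ofReal_integral_eq_lintegral_ofReal (hDc.integrableOn_Ioc)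
      (Eventually.of_forall hDnn)]
    congr 1
    rw [← intervalIntegral.integral_of_le (by linarith [Nat.cast_nonneg (α := ℝ) n] :
      (n:ℝ) ≤ (n:ℝ)+1)]
    exact hFTC n
  have hE0 : (∫ x in QS, x.2 * ρ₀ x) = E 0 :=
    (setIntegral_congr_fun measurableSet_QS fun x _ => by rw [hinit x]).symm
  rw [Ioi_eq_iUnion, lintegral_iUnion (fun n => measurableSet_Ioc) Ioc_pairwise_disjoint]
  simp only [hIoc]
  rw [ENNReal.tsum_eq_iSup_nat]
  apply iSup_le
  intro N
  have hEmono : ∀ m k : ℕ, m ≤ k → E k ≤ E m := by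
    intro m k hmk
    exact hanti (Set.mem_Ici.2 (Nat.cast_nonneg m)) (Set.mem_Ici.2 (Nat.cast_nonneg k))
      (by exact_mod_cast hmk)
  have hpart : ∑ n ∈ Finset.range N, ENNReal.ofReal (E n - E (n + 1))
      = ENNReal.ofReal (E 0 - E N) := by
    induction N with
    | zero => simp
    | succ k ih =>
      rw [Finset.sum_range_succ, ih,
        ← ENNReal.ofReal_add
          (by have := hEmono 0 k (Nat.zero_le k); push_cast at this; linarith)
          (by have := hEmono k (k+1) (Nat.le_succ k); push_cast at this; linarith)]
      congr 1
      push_cast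
      ring
  rw [hpart]
  apply ENNReal.ofReal_le_ofReal
  have h1 := hElow N (Nat.cast_nonneg N)
  rw [hE0]
  linarith
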